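/- Let n ≥ 2 and 1 ≤ p ≤ n − 1, let F : ℝⁿ → ℝᵖ be continuously differentiable, let Z = F⁻¹(0), and let y ∈ Z with first coordinate x₁. Assume that the p × (n−1) matrix of partial derivatives (∂Fᵢ/∂xⱼ(y)) for 1 ≤ i ≤ p and 2 ≤ j ≤ n has rank p. Then there exists an open connected neighborhood U of y in ℝⁿ such that U ∩ Z_{<x₁} is nonempty and connected, and U ∩ Z_{x₁} is contained in the closure of U ∩ Z_{<x₁}. -/

import Mathlib

set_option maxHeartbeats 1000000


/-- Let `n ≥ 2`, `1 ≤ p ≤ n - 1`, let `F : ℝⁿ → ℝᵖ` be continuously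
differentiable, let `Z = F⁻¹(0)` and let `y ∈ Z` with first coordinate `y 0`.  Assume the
`p × (n-1)` matrix of partial derivatives `∂Fᵢ/∂xⱼ(y)` for `1 ≤ i ≤ p`, `2 ≤ j ≤ n`
(i.e. over all coordinate indices `j ≠ 0`) has rank `p`.  Then there is an open connected
neighborhood `U` of `y` such that `U ∩ Z_{<y₁}` is nonempty and connected, and
`U ∩ Z_{y₁}` is contained in the closure of `U ∩ Z_{<y₁}`. -/
theorem exists_good_nbhd_of_noncritical
    {n p : ℕ} [NeZero n] (hn : 2 ≤ n) (hp1 : 1 ≤ p) (hpn : p ≤ n - 1)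
    (F : (Fin n → ℝ) → (Fin p → ℝ)) (hF : ContDiff ℝ 1 F)
    (Z : Set (Fin n → ℝ)) (hZ : Z = F ⁻¹' {0})
    (y : Fin n → ℝ) (hy : y ∈ Z)
    (hrank : (Matrix.of fun (i : Fin p) (j : {j : Fin n // j ≠ 0}) =>
        fderiv ℝ F y (Pi.single (j : Fin n) 1) i).rank = p) :
    ∃ U : Set (Fin n → ℝ), IsOpen U ∧ IsConnected U ∧ y ∈ U ∧
      (U ∩ {z ∈ Z | z 0 < y 0}).Nonempty ∧
      IsConnected (U ∩ {z ∈ Z | z 0 < y 0}) ∧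
      U ∩ {z ∈ Z | z 0 = y 0} ⊆ closure (U ∩ {z ∈ Z | z 0 < y 0}) := by
  subst hZ
  have hy0 : F y = 0 := hy
  set D := fderiv ℝ F y with hDdef
  have hdF : HasStrictFDerivAt F D y := (hF.contDiffAt).hasStrictFDerivAt one_ne_zero
  set G : (Fin n → ℝ) → ℝ × (Fin p → ℝ) := fun x => (x 0, F x) with hGdef
  set G' : (Fin n → ℝ) →L[ℝ] ℝ × (Fin p → ℝ) :=
    (ContinuousLinearMap.proj 0).prod D with hG'def
  have hGder : HasStrictFDerivAt G G' y :=
    ((ContinuousLinearMap.proj (R := ℝ) (φ := fun _ : Fin n => ℝ) 0).hasStrictFDerivAt).prodMk hdF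
  -- D is surjective on the coordinates ≠ 0
  have hDsurj : ∀ v : Fin p → ℝ, ∃ w : Fin n → ℝ, w 0 = 0 ∧ D w = v := by
    set M : Matrix (Fin p) {j : Fin n // j ≠ 0} ℝ :=
      Matrix.of fun i j => D (Pi.single (j : Fin n) 1) i with hMdef
    have hMsurj : Function.Surjective M.mulVecLin := by
      rw [← LinearMap.range_eq_top]
      apply Submodule.eq_top_of_finrank_eq
      rw [Module.finrank_fin_fun]
      exact hrank
    intro v
    obtain ⟨c, hc⟩ := hMsurj v
    refine ⟨∑ j : {j : Fin n // j ≠ 0}, c j • (Pi.single (j : Fin n) (1 : ℝ) : Fin n → ℝ), ?_, ?_⟩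
    · rw [Finset.sum_apply]
      apply Finset.sum_eq_zero
      intro j _
      simp [Pi.single_eq_of_ne (Ne.symm j.2)]
    · funext i
      rw [map_sum]
      simp only [map_smul]
      rw [Finset.sum_apply, ← hc]
      simp [M, Matrix.mulVecLin_apply, Matrix.mulVec, dotProduct, mul_comm]
  -- G' is surjective
  have hrange : G'.range = ⊤ := by
    rw [LinearMap.range_eq_top]
    rintro ⟨t, v⟩
    obtain ⟨w, hw0, hDw⟩ := hDsurj (v - t • D ((Pi.single (0 : Fin n) (1 : ℝ)) : Fin n → ℝ))
    refine ⟨t • (Pi.single (0 : Fin n) (1 : ℝ) : Fin n → ℝ) + w, Prod.ext ?_ ?_⟩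
    · show (t • (Pi.single (0 : Fin n) (1 : ℝ) : Fin n → ℝ) + w) 0 = t
      simp [hw0, Pi.single_eq_same]
    · show D (t • (Pi.single (0 : Fin n) (1 : ℝ) : Fin n → ℝ) + w) = v
      rw [map_add, map_smul, hDw]
      abel
  -- the implicit-function partial homeomorphism
  set φ := hGder.implicitToOpenPartialHomeomorph G G' hrange with hφdef
  have hfst : ∀ x, (φ x).1 = (x 0, F x) :=
    fun x => hGder.implicitToOpenPartialHomeomorph_fst hrange x
  have ysrc : y ∈ φ.source :=
    hGder.mem_implicitToOpenPartialHomeomorph_source hrange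
  set k0 : G'.ker := (φ y).2 with hk0def
  have hφy : φ y = ((y 0, (0 : Fin p → ℝ)), k0) := by
    refine Prod.ext ?_ rfl
    rw [hfst y, hy0]
  have hytgt : φ y ∈ φ.target := φ.map_source ysrc
  obtain ⟨ε, hε, hball⟩ := Metric.isOpen_iff.1 φ.open_target _ hytgt
  set Vfull : Set ((ℝ × (Fin p → ℝ)) × G'.ker) :=
    (Metric.ball (y 0) ε ×ˢ Metric.ball (0 : Fin p → ℝ) ε) ×ˢ Metric.ball k0 ε with hVfdef
  have hVfull_eq : Vfull = Metric.ball (φ y) ε := by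
    rw [hVfdef, ball_prod_same, ball_prod_same, hφy]
  have hVfull_tgt : Vfull ⊆ φ.target := hVfull_eq ▸ hball
  set Vneg : Set ((ℝ × (Fin p → ℝ)) × G'.ker) :=
    (Set.Ioo (y 0 - ε) (y 0) ×ˢ ({0} : Set (Fin p → ℝ))) ×ˢ Metric.ball k0 ε with hVndef
  have hVneg_sub : Vneg ⊆ Vfull := by
    rintro ⟨⟨a, b⟩, c⟩ ⟨⟨ha, hb⟩, hc⟩
    refine ⟨⟨?_, ?_⟩, hc⟩
    · rw [Real.ball_eq_Ioo]
      exact ⟨ha.1, by linarith [ha.2]⟩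
    · simp only [Set.mem_singleton_iff] at hb
      simp [hb, hε]
    
  set U : Set (Fin n → ℝ) := φ.source ∩ φ ⁻¹' Vfull with hUdef
  -- image descriptions
  have himg : ∀ S : Set ((ℝ × (Fin p → ℝ)) × G'.ker), S ⊆ φ.target →
      φ.symm '' S = φ.source ∩ φ ⁻¹' S := by
    intro S hS
    ext z
    constructor
    · rintro ⟨w, hwS, rfl⟩
      have hw : w ∈ φ.target := hS hwS
      exact ⟨φ.map_target hw, by rw [Set.mem_preimage, φ.right_inv hw]; exact hwS⟩
    · rintro ⟨hzsrc, hzV⟩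
      exact ⟨φ z, hzV, φ.left_inv hzsrc⟩
  have hUimg : U = φ.symm '' Vfull := (himg Vfull hVfull_tgt).symm
  have hneg_eq : U ∩ {z ∈ F ⁻¹' {0} | z 0 < y 0} = φ.source ∩ φ ⁻¹' Vneg := by
    ext z
    have h1 : (φ z).1.1 = z 0 := by rw [hfst z]
    have h2 : (φ z).1.2 = F z := by rw [hfst z]
    constructor
    · rintro ⟨⟨hsrc, hV⟩, hZz, hlt⟩
      obtain ⟨⟨ha, hb⟩, hc⟩ := hV
      refine ⟨hsrc, ⟨⟨?_, ?_⟩, hc⟩⟩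
      · rw [Real.ball_eq_Ioo] at ha
        rw [h1] at ha ⊢
        exact ⟨ha.1, hlt⟩
      · rw [h2]
        exact hZz
    · rintro ⟨hsrc, ⟨⟨ha, hb⟩, hc⟩⟩
      rw [h1] at ha
      rw [h2] at hb
      simp only [Set.mem_singleton_iff] at hb
      refine ⟨⟨hsrc, ⟨⟨?_, ?_⟩, hc⟩⟩, hb, ha.2⟩
      · rw [h1, Real.ball_eq_Ioo]
        exact ⟨ha.1, by linarith [ha.2]⟩
      · rw [h2, hb]
        simp [hε]
  have hneg_img : U ∩ {z ∈ F ⁻¹' {0} | z 0 < y 0} = φ.symm '' Vneg := by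
    rw [hneg_eq, himg Vneg (fun x hx => hVfull_tgt (hVneg_sub hx))]
  -- connectedness facts
  have hBconn : IsConnected (Metric.ball k0 ε) :=
    (convex_ball k0 ε).isConnected (Metric.nonempty_ball.2 hε)
  have hVfull_conn : IsConnected Vfull := by
    refine IsConnected.prod (IsConnected.prod ?_ ?_) hBconn
    · exact (convex_ball (y 0) ε).isConnected (Metric.nonempty_ball.2 hε)
    · exact (convex_ball (0 : Fin p → ℝ) ε).isConnected (Metric.nonempty_ball.2 hε)
  have hVneg_conn : IsConnected Vneg := by
    refine IsConnected.prod (IsConnected.prod ?_ isConnected_singleton) hBconn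
    exact isConnected_Ioo (by linarith)
  refine ⟨U, ?_, ?_, ?_, ?_, ?_, ?_⟩
  · exact φ.continuousOn.isOpen_inter_preimage φ.open_source
      (((Metric.isOpen_ball.prod Metric.isOpen_ball).prod Metric.isOpen_ball))
  · rw [hUimg]
    exact hVfull_conn.image _ (φ.symm.continuousOn.mono hVfull_tgt)
  · exact ⟨ysrc, by rw [Set.mem_preimage, hVfull_eq]; exact Metric.mem_ball_self hε⟩
  · rw [hneg_img]
    refine Set.Nonempty.image _ ⟨((y 0 - ε / 2, 0), k0), ⟨⟨?_, rfl⟩, Metric.mem_ball_self hε⟩⟩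
    constructor <;> [linarith; linarith]
  · rw [hneg_img]
    exact hVneg_conn.image _ (φ.symm.continuousOn.mono
      (fun x hx => hVfull_tgt (hVneg_sub hx)))
  · rintro z ⟨hzU, hzZ, hzeq⟩
    obtain ⟨hsrc, hV⟩ := hzU
    set κ : G'.ker := (φ z).2 with hκdef
    have hκB : κ ∈ Metric.ball k0 ε := hV.2
    have hφz : φ z = ((y 0, (0 : Fin p → ℝ)), κ) := by
      refine Prod.ext ?_ rfl
      rw [hfst z, hzeq, hzZ]
    have hcont : ContinuousAt (fun t : ℝ => φ.symm ((t, (0 : Fin p → ℝ)), κ)) (y 0) := by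
      refine ContinuousAt.comp ?_ (by fun_prop)
      have : ((y 0, (0 : Fin p → ℝ)), κ) ∈ φ.target := hφz ▸ φ.map_source hsrc
      exact φ.continuousAt_symm this
    have hlim : Filter.Tendsto (fun t : ℝ => φ.symm ((t, (0 : Fin p → ℝ)), κ))
        (nhdsWithin (y 0) (Set.Iio (y 0))) (nhds z) := by
      have : φ.symm ((y 0, (0 : Fin p → ℝ)), κ) = z := by
        rw [← hφz, φ.left_inv hsrc]
      exact this ▸ hcont.tendsto.mono_left nhdsWithin_le_nhds
    refine mem_closure_of_tendsto hlim ?_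
    filter_upwards [Ioo_mem_nhdsLT_of_mem (show y 0 ∈ Set.Ioc (y 0 - ε) (y 0) from
      ⟨by linarith, le_refl _⟩)] with t ht
    have hwV : ((t, (0 : Fin p → ℝ)), κ) ∈ Vneg := ⟨⟨ht, rfl⟩, hκB⟩
    rw [hneg_img]
    exact ⟨_, hwV, rfl⟩
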